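/- Let b ∈ ℕ and let m_1, …, m_b be elements of a commutative ring R (in particular, integers). Then Σ_{w ∈ S_b} ∏_{k=1}^{b} ( m_k + 2(k−1) − 2·|J_w^{<k}| ) = b! · ∏_{k=1}^{b} ( m_k + k − 1 ), where the factor b! denotes b-factorial acting by scalar multiplication. (This is the key summation identity established in the proof of Theorem 3.8.) -/

import Mathlib

open Finset Equiv

private def Phi (b : ℕ) (p : Fin (b+1) × Equiv.Perm (Fin b)) : Equiv.Perm (Fin (b+1)) :=
  (finSuccEquivLast.trans (p.2.optionCongr)).trans (finSuccEquiv' p.1).symm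

private lemma Phi_last (b : ℕ) (p : Fin (b+1) × Equiv.Perm (Fin b)) :
    Phi b p (Fin.last b) = p.1 := by
  simp [Phi, finSuccEquivLast_last, finSuccEquiv'_symm_none]

private lemma Phi_castSucc (b : ℕ) (p : Fin (b+1) × Equiv.Perm (Fin b)) (j : Fin b) :
    Phi b p (Fin.castSucc j) = p.1.succAbove (p.2 j) := by
  simp [Phi, finSuccEquivLast_castSucc, finSuccEquiv'_symm_some]

private lemma Phi_bij (b : ℕ) : Function.Bijective (Phi b) := by
  rw [Fintype.bijective_iff_injective_and_card]
  constructor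
  · rintro ⟨v, e⟩ ⟨v', e'⟩ h
    have hv : v = v' := by
      have := congrArg (fun w => w (Fin.last b)) h
      simpa [Phi_last] using this
    subst hv
    have he : e = e' := by
      ext j
      have := congrArg (fun w => w (Fin.castSucc j)) h
      simp only [Phi_castSucc] at this
      exact congrArg Fin.val (Fin.succAbove_right_injective this)
    rw [he]
  · simp [Fintype.card_perm, Nat.factorial_succ]

private lemma card_last (b : ℕ) (v : Fin (b+1)) (e : Equiv.Perm (Fin b)) :
    (Finset.univ.filter (fun j : Fin (b+1) =>
        j < Fin.last b ∧ Phi b (v, e) j < Phi b (v, e) (Fin.last b))).card = (v : ℕ) := by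
  have himg : Finset.univ.filter (fun j : Fin (b+1) =>
        j < Fin.last b ∧ Phi b (v, e) j < Phi b (v, e) (Fin.last b))
      = Finset.image (fun i : Fin b => Fin.castSucc (e.symm i))
          (Finset.univ.filter (fun i : Fin b => v.succAbove i < v)) := by
    ext z
    simp only [Finset.mem_filter, Finset.mem_image, Finset.mem_univ, true_and,
      Phi_last, Phi_castSucc]
    constructor
    · rintro ⟨hz, hlt⟩
      obtain ⟨y, rfl⟩ := Fin.exists_castSucc_eq.mpr (Fin.ne_last_of_lt hz)
      refine ⟨e y, ?_, by simp⟩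
      rw [Phi_castSucc] at hlt
      simpa using hlt
    · rintro ⟨i, hi, rfl⟩
      refine ⟨Fin.castSucc_lt_last _, ?_⟩
      rw [Phi_castSucc]
      simpa using hi
  rw [himg, Finset.card_image_of_injective _
    (fun a a' h => e.symm.injective (Fin.castSucc_injective b h))]
  -- card of {i : Fin b | v.succAbove i < v} = v
  have h1 : ∀ i : Fin b, (v.succAbove i < v ↔ (i:ℕ) < (v:ℕ)) := by
    intro i
    rw [Fin.succAbove_lt_iff_castSucc_lt, Fin.lt_def, Fin.coe_castSucc]
  have hv : (v:ℕ) ≤ b := Nat.lt_succ_iff.mp v.isLt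
  have h2 : (Finset.univ.filter (fun i : Fin b => v.succAbove i < v)).card
      = ∑ i : Fin b, if (i:ℕ) < (v:ℕ) then 1 else 0 := by
    rw [Finset.card_filter]
    exact Finset.sum_congr rfl fun i _ => by rw [if_congr (h1 i) rfl rfl]
  rw [h2, Fin.sum_univ_eq_sum_range (fun i => if i < (v:ℕ) then 1 else 0), ← Finset.card_filter]
  have h3 : (Finset.range b).filter (fun i => i < (v:ℕ)) = Finset.range (v:ℕ) := by
    ext k; simp; omega
  rw [h3, Finset.card_range]

private lemma card_castSucc (b : ℕ) (v : Fin (b+1)) (e : Equiv.Perm (Fin b)) (j : Fin b) :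
    (Finset.univ.filter (fun j' : Fin (b+1) =>
        j' < Fin.castSucc j ∧ Phi b (v, e) j' < Phi b (v, e) (Fin.castSucc j))).card
      = (Finset.univ.filter (fun i : Fin b => i < j ∧ e i < e j)).card := by
  have himg : Finset.univ.filter (fun j' : Fin (b+1) =>
        j' < Fin.castSucc j ∧ Phi b (v, e) j' < Phi b (v, e) (Fin.castSucc j))
      = Finset.image Fin.castSucc
          (Finset.univ.filter (fun i : Fin b => i < j ∧ e i < e j)) := by
    ext z
    simp only [Finset.mem_filter, Finset.mem_image, Finset.mem_univ, true_and]
    constructor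
    · rintro ⟨hz, hlt⟩
      have hne : z ≠ Fin.last b :=
        Fin.ne_last_of_lt (lt_of_lt_of_le hz (Fin.le_last _))
      obtain ⟨y, rfl⟩ := Fin.exists_castSucc_eq.mpr hne
      rw [Phi_castSucc, Phi_castSucc] at hlt
      exact ⟨y, ⟨Fin.castSucc_lt_castSucc_iff.mp hz,
        (Fin.succAbove_lt_succAbove_iff).mp hlt⟩, rfl⟩
    · rintro ⟨i, ⟨hij, hei⟩, rfl⟩
      rw [Phi_castSucc, Phi_castSucc]
      exact ⟨Fin.castSucc_lt_castSucc_iff.mpr hij,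
        (Fin.succAbove_lt_succAbove_iff).mpr hei⟩
  rw [himg, Finset.card_image_of_injective _ (Fin.castSucc_injective b)]

private lemma sum_linear {R : Type*} [CommRing R] (b : ℕ) (x : R) :
    ∑ v : Fin (b+1), (x + 2*((b:ℕ):R) - 2*((v:ℕ):R)) = ((b+1 : ℕ):R) * (x + (b:ℕ)) := by
  have h : (∑ v : Fin (b+1), ((v:ℕ):R)) * 2 = ((b+1:ℕ):R) * ((b:ℕ):R) := by
    have h0 : (∑ i ∈ Finset.range (b+1), i) * 2 = (b+1) * b := Finset.sum_range_id_mul_two (b+1)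
    have : (∑ v : Fin (b+1), ((v:ℕ):R)) = ((∑ i ∈ Finset.range (b+1), i : ℕ) : R) := by
      push_cast
      rw [Fin.sum_univ_eq_sum_range (fun i => (i:R))]
    rw [this]; exact_mod_cast congrArg (Nat.cast : ℕ → R) h0
  simp only [Finset.sum_sub_distrib, Finset.sum_add_distrib, Finset.sum_const,
    Finset.card_univ, Fintype.card_fin, ← Finset.mul_sum, nsmul_eq_mul]
  push_cast at h ⊢
  linear_combination -h

/-- The key summation identity in the proof of Theorem 3.8 (0-based indexing):
`Σ_{w ∈ S_b} ∏_k (m_k + 2k − 2|J_w^{<k}|) = b! • ∏_k (m_k + k)`, where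
`J_w^{<k} = {j < k : w(j) < w(k)}`. -/
theorem stmt5 {R : Type*} [CommRing R] (b : ℕ) (m : Fin b → R) :
    ∑ w : Equiv.Perm (Fin b), ∏ k : Fin b,
        (m k + 2 * ((k : ℕ) : R)
          - 2 * (((Finset.univ.filter (fun j => j < k ∧ w j < w k)).card : ℕ) : R))
      = b.factorial • ∏ k : Fin b, (m k + ((k : ℕ) : R)) := by
  induction b with
  | zero => simp
  | succ b ih =>
    have hsum := Fintype.sum_bijective (Phi b) (Phi_bij b)
      (fun p => ∏ k : Fin (b+1),
        (m k + 2 * ((k : ℕ) : R)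
          - 2 * (((Finset.univ.filter
              (fun j => j < k ∧ Phi b p j < Phi b p k)).card : ℕ) : R)))
      (fun w => ∏ k : Fin (b+1),
        (m k + 2 * ((k : ℕ) : R)
          - 2 * (((Finset.univ.filter (fun j => j < k ∧ w j < w k)).card : ℕ) : R)))
      (fun p => rfl)
    rw [← hsum, Fintype.sum_prod_type]
    have hterm : ∀ (v : Fin (b+1)) (e : Equiv.Perm (Fin b)),
        (∏ k : Fin (b+1),
          (m k + 2 * ((k : ℕ) : R)
            - 2 * (((Finset.univ.filter
                (fun j => j < k ∧ Phi b (v, e) j < Phi b (v, e) k)).card : ℕ) : R)))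
        = (∏ j : Fin b,
            ((m (Fin.castSucc j)) + 2 * ((j : ℕ) : R)
              - 2 * (((Finset.univ.filter (fun i => i < j ∧ e i < e j)).card : ℕ) : R)))
          * (m (Fin.last b) + 2*((b:ℕ):R) - 2*((v:ℕ):R)) := by
      intro v e
      rw [Fin.prod_univ_castSucc]
      congr 1
      · exact Finset.prod_congr rfl fun j _ => by
          rw [card_castSucc b v e j, Fin.coe_castSucc]
      · rw [card_last b v e, Fin.val_last]
    have hstep : ∀ v : Fin (b+1),
        (∑ e : Equiv.Perm (Fin b),
          ∏ k : Fin (b+1),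
            (m k + 2 * ((k : ℕ) : R)
              - 2 * (((Finset.univ.filter
                  (fun j => j < k ∧ Phi b (v, e) j < Phi b (v, e) k)).card : ℕ) : R)))
        = (m (Fin.last b) + 2*((b:ℕ):R) - 2*((v:ℕ):R))
            * (b.factorial • ∏ j : Fin b, (m (Fin.castSucc j) + ((j : ℕ) : R))) := by
      intro v
      rw [Finset.sum_congr rfl fun e _ => hterm v e, ← Finset.sum_mul,
        ih (fun j => m (Fin.castSucc j)), mul_comm]
    rw [Finset.sum_congr rfl fun v _ => hstep v, ← Finset.sum_mul, sum_linear b (m (Fin.last b))]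
    rw [Fin.prod_univ_castSucc (fun k : Fin (b+1) => m k + ((k:ℕ):R))]
    simp only [Fin.coe_castSucc, Fin.val_last, nsmul_eq_mul]
    push_cast [Nat.factorial_succ]
    ring
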